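/- Fix d ≥ 2 and n ≥ 1, let φ(t) = t²/2, and let W = 1_n 1_nᵀ (complete graph with unit weights). If X ∈ ℝ^{d×n} with unit-norm columns is critical for f and has negative-semidefinite Hessian, then the columns of X are all equal up to sign: x_i = ±x_j for all i, j (equivalently rank(X) = 1), and X is a global maximum of f over matrices with unit-norm columns. -/

import Mathlib

open Matrix

noncomputable section

/-- Frobenius inner product `⟨A,B⟩ = ∑ᵢⱼ Aᵢⱼ Bᵢⱼ`. -/
def frob {ι κ : Type*} [Fintype ι] [Fintype κ] (A B : Matrix ι κ ℝ) : ℝ :=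
  ∑ i, ∑ j, A i j * B i j

/-- `ddiag` zeroes out all off-diagonal entries of a square matrix. -/
def ddiag {ι : Type*} [Fintype ι] [DecidableEq ι] (M : Matrix ι ι ℝ) : Matrix ι ι ℝ :=
  Matrix.diagonal fun i => M i i

/-- Graph Laplacian `L(M) = diag(M 1) − M`. -/
def lap {ι : Type*} [Fintype ι] [DecidableEq ι] (M : Matrix ι ι ℝ) : Matrix ι ι ℝ :=
  Matrix.diagonal (fun i => ∑ j, M i j) - M

/-- `X` has unit-norm columns. -/
def unitCols {d : ℕ} {ι : Type*} [Fintype ι] (X : Matrix (Fin d) ι ℝ) : Prop :=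
  ∀ j, ∑ i, X i j ^ 2 = 1

/-- `A = W ⊙ φ'(XᵀX)` (`d1` playing the role of `φ'`). -/
def Amat {d : ℕ} {ι : Type*} [Fintype ι] (W : Matrix ι ι ℝ) (X : Matrix (Fin d) ι ℝ)
    (d1 : ℝ → ℝ) : Matrix ι ι ℝ :=
  Matrix.hadamard W ((Xᵀ * X).map d1)

/-- `S = ddiag(XᵀXA) − A`. -/
def Smat {d : ℕ} {ι : Type*} [Fintype ι] [DecidableEq ι] (W : Matrix ι ι ℝ)
    (X : Matrix (Fin d) ι ℝ) (d1 : ℝ → ℝ) : Matrix ι ι ℝ :=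
  ddiag ((Xᵀ * X) * Amat W X d1) - Amat W X d1

/-- First-order criticality: `X S = 0`, i.e. `X·ddiag(XᵀXA) = XA`
(vanishing Riemannian gradient on the product of spheres). -/
def IsCritical {d : ℕ} {ι : Type*} [Fintype ι] [DecidableEq ι] (W : Matrix ι ι ℝ)
    (X : Matrix (Fin d) ι ℝ) (d1 : ℝ → ℝ) : Prop :=
  X * Smat W X d1 = 0

/-- The Riemannian Hessian quadratic form of `f` at `X` is negative semidefinite:
`−⟨ẊᵀẊ, S⟩ + (1/2)⟨(XᵀẊ + ẊᵀX)^{⊙2}, W ⊙ φ''(XᵀX)⟩ ≤ 0` for all tangent `Ẋ`. -/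
def HessNegSemidef {d : ℕ} {ι : Type*} [Fintype ι] [DecidableEq ι] (W : Matrix ι ι ℝ)
    (X : Matrix (Fin d) ι ℝ) (d1 d2 : ℝ → ℝ) : Prop :=
  ∀ V : Matrix (Fin d) ι ℝ, (∀ j, (Xᵀ * V) j j = 0) →
    -(frob (Vᵀ * V) (Smat W X d1))
      + (1 / 2) * frob ((Xᵀ * V + Vᵀ * X).map fun t => t ^ 2)
          (Matrix.hadamard W ((Xᵀ * X).map d2)) ≤ 0

/-- The graph with an edge `{i,j}` whenever `w_ij > 0` is connected. -/
def ConnectedW {ι : Type*} (W : Matrix ι ι ℝ) : Prop :=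
  (SimpleGraph.fromRel fun i j => 0 < W i j).Connected

/-- `f(Y) = (1/2)⟨W, φ(YᵀY)⟩`. -/
def fval {d : ℕ} {ι : Type*} [Fintype ι] (W : Matrix ι ι ℝ) (φ : ℝ → ℝ)
    (Y : Matrix (Fin d) ι ℝ) : ℝ :=
  (1 / 2) * frob W ((Yᵀ * Y).map φ)

/-- `h(t) = tφ'(t) − (1−t²)φ''(t)`. -/
def hfun (d1 d2 : ℝ → ℝ) (t : ℝ) : ℝ := t * d1 t - (1 - t ^ 2) * d2 t

/-- The matrix `M` with `m_ij = w_ij · h(x_iᵀx_j)`. -/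
def Mmat {d : ℕ} {ι : Type*} [Fintype ι] (W : Matrix ι ι ℝ) (X : Matrix (Fin d) ι ℝ)
    (d1 d2 : ℝ → ℝ) : Matrix ι ι ℝ :=
  Matrix.of fun i j => W i j * hfun d1 d2 ((Xᵀ * X) i j)

/-- The kernel of `L` is exactly `span(1)`. -/
def KernelIsConst {ι : Type*} [Fintype ι] [DecidableEq ι] (L : Matrix ι ι ℝ) : Prop :=
  ∀ α : ι → ℝ, L.mulVec α = 0 ↔ ∃ c : ℝ, ∀ k, α k = c

/-- The regular `n`-gon configuration on the unit circle. -/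
def ngon (n : ℕ) : Matrix (Fin 2) (Fin n) ℝ :=
  Matrix.of fun a j =>
    if a = 0 then Real.cos (2 * Real.pi * (j : ℝ) / (n : ℝ))
    else Real.sin (2 * Real.pi * (j : ℝ) / (n : ℝ))

/-- The log-sum-exp smoothing `φ_{ε,τ}(t) = ε·log(1 + e^{(t−τ)/ε})` of the ReLU. -/
def philse (ε τ : ℝ) : ℝ → ℝ := fun t => ε * Real.log (1 + Real.exp ((t - τ) / ε))

/-- Theorem 5, quadratic case: for `φ(t) = t²/2` and the complete unit-weight
graph, second-order critical points have all columns equal up to sign (rank one) and are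
global maxima. -/
lemma sum_eq_pair' {n : ℕ} {j k : Fin n} (hjk : j ≠ k) (f : Fin n → ℝ)
    (h : ∀ p, p ≠ j → p ≠ k → f p = 0) : ∑ p, f p = f j + f k := by
  rw [← Finset.sum_pair hjk]
  refine (Finset.sum_subset (Finset.subset_univ _) fun x _ hx => ?_).symm
  simp only [Finset.mem_insert, Finset.mem_singleton, not_or] at hx
  exact h x hx.1 hx.2

lemma sum_sub_mul_sub {d n : ℕ} (X : Matrix (Fin d) (Fin n) ℝ) (a b c e : Fin n) (s u : ℝ) :
    ∑ i, (X i a - s * X i b) * (X i c - u * X i e)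
      = (∑ i, X i a * X i c) - u * (∑ i, X i a * X i e) - s * (∑ i, X i b * X i c)
        + s * u * (∑ i, X i b * X i e) := by
  have h : ∀ i, (X i a - s * X i b) * (X i c - u * X i e)
      = X i a * X i c - u * (X i a * X i e) - s * (X i b * X i c) + s * u * (X i b * X i e) :=
    fun i => by ring
  simp_rw [h, Finset.sum_add_distrib, Finset.sum_sub_distrib, ← Finset.mul_sum]

lemma XtV_entry {d n : ℕ} (X : Matrix (Fin d) (Fin n) ℝ) (j k : Fin n) (t : ℝ)
    (V : Matrix (Fin d) (Fin n) ℝ)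
    (hV : V = Matrix.of fun i q => if q = j then X i k - t * X i j
      else if q = k then X i j - t * X i k else 0) (p q : Fin n) :
    (Xᵀ * V) p q = if q = j then (∑ i, X i p * X i k) - t * ∑ i, X i p * X i j
      else if q = k then (∑ i, X i p * X i j) - t * ∑ i, X i p * X i k else 0 := by
  subst hV
  simp_rw [Matrix.mul_apply, Matrix.transpose_apply, Matrix.of_apply]
  split_ifs with h1 h2
  · simp_rw [mul_sub, Finset.sum_sub_distrib, mul_left_comm, ← Finset.mul_sum]
  · simp_rw [mul_sub, Finset.sum_sub_distrib, mul_left_comm, ← Finset.mul_sum]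
  · simp

lemma key_sign {d n : ℕ}
    (X : Matrix (Fin d) (Fin n) ℝ) (hX : unitCols X)
    (hcrit : IsCritical (Matrix.of fun _ _ => (1 : ℝ)) X (deriv fun t => t ^ 2 / 2))
    (hhess : HessNegSemidef (Matrix.of fun _ _ => (1 : ℝ)) X (deriv fun t => t ^ 2 / 2)
      (deriv (deriv fun t => t ^ 2 / 2)))
    {j k : Fin n} (hjk : j ≠ k) :
    (∑ i, X i j * X i k) ^ 2 = 1 := by
  have hd1 : (deriv fun t : ℝ => t ^ 2 / 2) = fun t => t := by
    ext t; simp [deriv_div_const]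
  have gdiag : ∀ p : Fin n, (∑ i, X i p * X i p) = 1 := by
    intro p; simpa [sq] using hX p
  have gsymm : ∀ p q : Fin n, (∑ i, X i p * X i q) = ∑ i, X i q * X i p :=
    fun p q => Finset.sum_congr rfl fun i _ => mul_comm _ _
  set W : Matrix (Fin n) (Fin n) ℝ := Matrix.of fun _ _ => (1 : ℝ) with hW
  set t : ℝ := ∑ i, X i j * X i k with ht
  set dd : Fin n → ℝ :=
    fun p => ∑ r, (∑ i, X i p * X i r) * (∑ i, X i r * X i p) with hdd
  -- S entries
  have hSe : ∀ p q : Fin n, Smat W X (deriv fun s => s ^ 2 / 2) p q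
      = (if p = q then dd p else 0) - ∑ i, X i p * X i q := by
    intro p q
    simp [Smat, ddiag, Amat, hd1, Matrix.hadamard, Matrix.diagonal_apply, Matrix.mul_apply,
      Matrix.transpose_apply, hW, hdd]
  -- criticality, entrywise
  have hcritE : ∀ p q : Fin n,
      (∑ r, (∑ i, X i p * X i r) * (∑ i, X i r * X i q)) = (∑ i, X i p * X i q) * dd q := by
    intro p q
    have h0 : (Xᵀ * X) * Smat W X (deriv fun s => s ^ 2 / 2) = 0 := by
      rw [Matrix.mul_assoc, hcrit, Matrix.mul_zero]
    have h1 := congrFun (congrFun h0 p) q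
    rw [Matrix.mul_apply, Matrix.zero_apply] at h1
    simp_rw [Matrix.mul_apply, Matrix.transpose_apply, hSe, mul_sub, mul_ite, mul_zero,
      Finset.sum_sub_distrib, Finset.sum_ite_eq' Finset.univ] at h1
    simp only [Finset.mem_univ, if_true] at h1
    linarith
  -- the test direction
  set V : Matrix (Fin d) (Fin n) ℝ := Matrix.of fun i q =>
    if q = j then X i k - t * X i j else if q = k then X i j - t * X i k else 0 with hV
  have hVij : ∀ i, V i j = X i k - t * X i j := fun i => by simp [hV]
  have hVik : ∀ i, V i k = X i j - t * X i k := fun i => by simp [hV, hjk.symm]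
  have hVz : ∀ (i : Fin d) (p : Fin n), p ≠ j → p ≠ k → V i p = 0 := by
    intro i p h1 h2; simp [hV, h1, h2]
  have hXV : ∀ p q : Fin n, (Xᵀ * V) p q
      = if q = j then (∑ i, X i p * X i k) - t * ∑ i, X i p * X i j
        else if q = k then (∑ i, X i p * X i j) - t * ∑ i, X i p * X i k else 0 := by
    exact XtV_entry X j k t V hV
  have hVX : ∀ p q : Fin n, (Vᵀ * X) p q = (Xᵀ * V) q p := by
    intro p q
    simp_rw [Matrix.mul_apply, Matrix.transpose_apply]
    exact Finset.sum_congr rfl fun i _ => mul_comm _ _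
  have haj : ∀ p, (Xᵀ * V) p j = (∑ i, X i p * X i k) - t * ∑ i, X i p * X i j := by
    intro p; rw [hXV]; simp
  have hak : ∀ p, (Xᵀ * V) p k = (∑ i, X i p * X i j) - t * ∑ i, X i p * X i k := by
    intro p; rw [hXV]; simp [hjk.symm]
  have haz : ∀ p q, q ≠ j → q ≠ k → (Xᵀ * V) p q = 0 := by
    intro p q h1 h2; rw [hXV]; simp [h1, h2]
  have htang : ∀ q, (Xᵀ * V) q q = 0 := by
    intro q
    rcases eq_or_ne q j with h1 | h1
    · rw [h1, haj, gdiag, ← ht]; ring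
    · rcases eq_or_ne q k with h2 | h2
      · rw [h2, hak, gdiag, gsymm k j, ← ht]; ring
      · exact haz q q h1 h2
  have hq := hhess V htang
  -- values of a at the four corners
  have hajj : (Xᵀ * V) j j = 0 := htang j
  have hakk : (Xᵀ * V) k k = 0 := htang k
  have hajk : (Xᵀ * V) j k = 1 - t ^ 2 := by rw [hak, gdiag, ← ht]; ring
  have hakj : (Xᵀ * V) k j = 1 - t ^ 2 := by rw [haj, gdiag, gsymm k j, ← ht]; ring
  -- V^T V entries
  have hVV : ∀ p q : Fin n, (Vᵀ * V) p q = ∑ i, V i p * V i q := by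
    intro p q; simp_rw [Matrix.mul_apply, Matrix.transpose_apply]
  have hVVjj : (Vᵀ * V) j j = 1 - t ^ 2 := by
    rw [hVV]; simp_rw [hVij]; rw [sum_sub_mul_sub, gdiag, gdiag, gsymm k j, ← ht]; ring
  have hVVkk : (Vᵀ * V) k k = 1 - t ^ 2 := by
    rw [hVV]; simp_rw [hVik]; rw [sum_sub_mul_sub, gdiag, gdiag, gsymm k j, ← ht]; ring
  have hVVjk : (Vᵀ * V) j k = t ^ 3 - t := by
    rw [hVV]; simp_rw [hVij, hVik]
    rw [sum_sub_mul_sub, gdiag, gdiag, gsymm k j, ← ht]; ring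
  have hVVkj : (Vᵀ * V) k j = t ^ 3 - t := by
    rw [hVV]; simp_rw [hVij, hVik]
    rw [sum_sub_mul_sub, gdiag, gdiag, gsymm k j, ← ht]; ring
  have hVVz : ∀ p q : Fin n, p ≠ j → p ≠ k → (Vᵀ * V) p q = 0 := by
    intro p q h1 h2; rw [hVV]
    exact Finset.sum_eq_zero fun i _ => by rw [hVz i p h1 h2, zero_mul]
  have hVVz' : ∀ p q : Fin n, q ≠ j → q ≠ k → (Vᵀ * V) p q = 0 := by
    intro p q h1 h2; rw [hVV]
    exact Finset.sum_eq_zero fun i _ => by rw [hVz i q h1 h2, mul_zero]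
  -- S corner values
  have hSjj : Smat W X (deriv fun s => s ^ 2 / 2) j j = dd j - 1 := by
    rw [hSe, if_pos rfl, gdiag]
  have hSkk : Smat W X (deriv fun s => s ^ 2 / 2) k k = dd k - 1 := by
    rw [hSe, if_pos rfl, gdiag]
  have hSjk : Smat W X (deriv fun s => s ^ 2 / 2) j k = -t := by
    rw [hSe, if_neg hjk, ← ht]; ring
  have hSkj : Smat W X (deriv fun s => s ^ 2 / 2) k j = -t := by
    rw [hSe, if_neg hjk.symm, gsymm k j, ← ht]; ring
  -- first frobenius term
  have hfrob1 : frob (Vᵀ * V) (Smat W X (deriv fun s => s ^ 2 / 2))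
      = (1 - t ^ 2) * (dd j - 1) + (t ^ 3 - t) * (-t)
        + ((t ^ 3 - t) * (-t) + (1 - t ^ 2) * (dd k - 1)) := by
    rw [frob]
    rw [sum_eq_pair' hjk _ (fun p h1 h2 =>
      Finset.sum_eq_zero fun q _ => by rw [hVVz p q h1 h2, zero_mul])]
    rw [sum_eq_pair' hjk _ (fun q h1 h2 => by rw [hVVz' j q h1 h2, zero_mul]),
      sum_eq_pair' hjk _ (fun q h1 h2 => by rw [hVVz' k q h1 h2, zero_mul])]
    rw [hVVjj, hVVjk, hVVkj, hVVkk, hSjj, hSjk, hSkj, hSkk]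
  -- second frobenius term
  have hones : ∀ p q : Fin n,
      (Matrix.hadamard W ((Xᵀ * X).map (deriv (deriv fun s : ℝ => s ^ 2 / 2)))) p q = 1 := by
    intro p q; rw [hd1]; simp [Matrix.hadamard, hW]
  have hfrob2a : frob (((Xᵀ * V) + (Vᵀ * X)).map fun s => s ^ 2)
      (Matrix.hadamard W ((Xᵀ * X).map (deriv (deriv fun s : ℝ => s ^ 2 / 2))))
      = ∑ p, ∑ q, ((Xᵀ * V) p q + (Xᵀ * V) q p) ^ 2 := by
    simp_rw [frob, Matrix.map_apply, Matrix.add_apply, hones, mul_one, hVX]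
  -- split the square
  have hsplit : ∑ p, ∑ q, ((Xᵀ * V) p q + (Xᵀ * V) q p) ^ 2
      = 2 * (∑ p, ∑ q, ((Xᵀ * V) p q) ^ 2)
        + 2 * (∑ p, ∑ q, (Xᵀ * V) p q * (Xᵀ * V) q p) := by
    have hpt : ∀ p q : Fin n, ((Xᵀ * V) p q + (Xᵀ * V) q p) ^ 2
        = ((Xᵀ * V) p q) ^ 2 + ((Xᵀ * V) q p) ^ 2
          + 2 * ((Xᵀ * V) p q * (Xᵀ * V) q p) := fun p q => by ring
    simp_rw [hpt, Finset.sum_add_distrib, ← Finset.mul_sum]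
    have hsw : ∑ p, ∑ q, ((Xᵀ * V) q p) ^ 2 = ∑ p, ∑ q, ((Xᵀ * V) p q) ^ 2 :=
      Finset.sum_comm
    rw [hsw]; ring
  -- the pure square term
  have hS1 : ∑ p, ∑ q, ((Xᵀ * V) p q) ^ 2 = (1 - t ^ 2) * (dd j + dd k) := by
    have hin : ∀ p : Fin n, ∑ q, ((Xᵀ * V) p q) ^ 2
        = (1 + t ^ 2) * ((∑ i, X i j * X i p) * (∑ i, X i p * X i j))
          + (1 + t ^ 2) * ((∑ i, X i k * X i p) * (∑ i, X i p * X i k))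
          - (2 * t) * ((∑ i, X i j * X i p) * (∑ i, X i p * X i k))
          - (2 * t) * ((∑ i, X i k * X i p) * (∑ i, X i p * X i j)) := by
      intro p
      rw [sum_eq_pair' hjk _ (fun q h1 h2 => by rw [haz p q h1 h2]; ring)]
      rw [haj, hak, gsymm j p, gsymm k p]
      ring
    rw [Finset.sum_congr rfl fun p _ => hin p]
    simp_rw [Finset.sum_sub_distrib, Finset.sum_add_distrib, ← Finset.mul_sum]
    rw [hcritE j j, hcritE k k, hcritE j k, hcritE k j, gdiag, gdiag, gsymm k j, ← ht]
    rw [hdd]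
    ring
  -- the cross term
  have hS2 : ∑ p, ∑ q, (Xᵀ * V) p q * (Xᵀ * V) q p = 2 * (1 - t ^ 2) ^ 2 := by
    have hin : ∀ p : Fin n, ∑ q, (Xᵀ * V) p q * (Xᵀ * V) q p
        = (Xᵀ * V) p j * (Xᵀ * V) j p + (Xᵀ * V) p k * (Xᵀ * V) k p :=
      fun p => sum_eq_pair' hjk _ (fun q h1 h2 => by rw [haz p q h1 h2, zero_mul])
    rw [Finset.sum_congr rfl fun p _ => hin p]
    rw [sum_eq_pair' hjk _ (fun p h1 h2 => by rw [haz j p h1 h2, haz k p h1 h2]; ring)]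
    rw [hajj, hakk, hajk, hakj]; ring
  -- conclude
  rw [hfrob1, hfrob2a, hsplit, hS1, hS2] at hq
  have h4 : (4 : ℝ) * (1 - t ^ 2) ^ 2 ≤ 0 := by linarith
  have h0 : (1 - t ^ 2) ^ 2 = 0 := le_antisymm (by linarith) (sq_nonneg _)
  have h1 : 1 - t ^ 2 = 0 := by
    exact (pow_eq_zero_iff two_ne_zero).mp h0
  have : t ^ 2 = 1 := by linarith
  rw [ht] at this
  exact this
theorem quadratic_case_benign
    {d n : ℕ} (hd : 2 ≤ d) (hn : 1 ≤ n)
    (X : Matrix (Fin d) (Fin n) ℝ) (hX : unitCols X)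
    (hcrit : IsCritical (Matrix.of fun _ _ => (1 : ℝ)) X (deriv fun t => t ^ 2 / 2))
    (hhess : HessNegSemidef (Matrix.of fun _ _ => (1 : ℝ)) X (deriv fun t => t ^ 2 / 2)
      (deriv (deriv fun t => t ^ 2 / 2))) :
    (∀ j j' : Fin n, (∀ i, X i j = X i j') ∨ (∀ i, X i j = -X i j')) ∧
    X.rank = 1 ∧
    (∀ Y : Matrix (Fin d) (Fin n) ℝ, unitCols Y →
      fval (Matrix.of fun _ _ => (1 : ℝ)) (fun t => t ^ 2 / 2) Y ≤
        fval (Matrix.of fun _ _ => (1 : ℝ)) (fun t => t ^ 2 / 2) X) := by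
  classical
  have gdiag : ∀ p : Fin n, (∑ i, X i p * X i p) = 1 := by
    intro p; simpa [sq] using hX p
  have gsymm : ∀ p q : Fin n, (∑ i, X i p * X i q) = ∑ i, X i q * X i p :=
    fun p q => Finset.sum_congr rfl fun i _ => mul_comm _ _
  have hsign : ∀ p q : Fin n, (∑ i, X i p * X i q) ^ 2 = 1 := by
    intro p q
    rcases eq_or_ne p q with rfl | h
    · rw [gdiag]; norm_num
    · exact key_sign X hX hcrit hhess h
  have hpm : ∀ j j' : Fin n, (∀ i, X i j = X i j') ∨ (∀ i, X i j = -X i j') := by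
    intro j j'
    have h1 := hsign j j'
    have h2 : (∑ i, X i j * X i j') = 1 ∨ (∑ i, X i j * X i j') = -1 :=
      mul_self_eq_one_iff.mp (by rw [← pow_two]; exact h1)
    rcases h2 with h2 | h2
    · left; intro i
      have hz : ∑ i, (X i j - X i j') ^ 2 = 0 := by
        have hpt : ∀ i, (X i j - X i j') ^ 2
            = X i j * X i j - X i j * X i j' - X i j' * X i j + X i j' * X i j' :=
          fun i => by ring
        simp_rw [hpt, Finset.sum_add_distrib, Finset.sum_sub_distrib]
        rw [gdiag, gdiag, gsymm j' j, h2]; norm_num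
      have h3 := (Finset.sum_eq_zero_iff_of_nonneg
        (fun i _ => sq_nonneg (X i j - X i j'))).mp hz i (Finset.mem_univ i)
      have h4 := (pow_eq_zero_iff two_ne_zero).mp h3
      linarith
    · right; intro i
      have hz : ∑ i, (X i j + X i j') ^ 2 = 0 := by
        have hpt : ∀ i, (X i j + X i j') ^ 2
            = X i j * X i j + X i j * X i j' + X i j' * X i j + X i j' * X i j' :=
          fun i => by ring
        simp_rw [hpt, Finset.sum_add_distrib]
        rw [gdiag, gdiag, gsymm j' j, h2]; norm_num
      have h3 := (Finset.sum_eq_zero_iff_of_nonneg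
        (fun i _ => sq_nonneg (X i j + X i j'))).mp hz i (Finset.mem_univ i)
      have h4 := (pow_eq_zero_iff two_ne_zero).mp h3
      linarith
  refine ⟨hpm, ?_, ?_⟩
  · -- rank = 1
    have j0 : Fin n := ⟨0, hn⟩
    set u : Fin d → ℝ := fun i => X i j0 with hu
    set ε : Fin n → ℝ := fun q => if ∀ i, X i q = X i j0 then 1 else -1 with hε
    have hcol : ∀ (i : Fin d) (q : Fin n), X i q = u i * ε q := by
      intro i q
      by_cases h : ∀ i, X i q = X i j0
      · rw [hε]; simp only [if_pos h, mul_one, hu]; exact h i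
      · rw [hε]; simp only [if_neg h]
        rcases hpm q j0 with h' | h'
        · exact absurd h' h
        · rw [h' i, hu]; ring
    have hfact : X = Matrix.replicateCol Unit u * Matrix.replicateRow Unit ε := by
      ext i q
      rw [Matrix.mul_apply]
      simp only [Matrix.replicateCol_apply, Matrix.replicateRow_apply, Finset.sum_const, Finset.card_univ,
        Fintype.card_unit, one_smul]
      exact hcol i q
    have hle : X.rank ≤ 1 := by
      calc X.rank ≤ (Matrix.replicateCol Unit u).rank := by
            rw [hfact]; exact Matrix.rank_mul_le_left _ _
        _ ≤ Fintype.card Unit := Matrix.rank_le_card_width _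
        _ = 1 := Fintype.card_unit
    have hne : X.rank ≠ 0 := by
      intro h
      rw [Matrix.rank] at h
      have hbot : LinearMap.range X.mulVecLin = ⊥ := Submodule.finrank_eq_zero.mp h
      have h2 : X.mulVecLin = 0 := LinearMap.range_eq_bot.mp hbot
      have h3 : X.mulVec (Pi.single j0 1) = 0 := by
        have : X.mulVecLin (Pi.single j0 1) = 0 := by rw [h2]; rfl
        rwa [Matrix.mulVecLin_apply] at this
      have h4 : ∀ i, X i j0 = 0 := by
        intro i
        have h5 := congrFun h3 i
        simp only [Matrix.mulVec_single, mul_one, Pi.zero_apply] at h5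
        simpa using h5
      have h6 := gdiag j0
      rw [Finset.sum_eq_zero (fun i _ => by rw [h4 i, mul_zero])] at h6
      norm_num at h6
    omega
  · -- global maximality
    intro Y hY
    have hfv : ∀ Z : Matrix (Fin d) (Fin n) ℝ,
        fval (Matrix.of fun _ _ => (1 : ℝ)) (fun t => t ^ 2 / 2) Z
          = (1 / 2) * ∑ p, ∑ q, ((∑ i, Z i p * Z i q) ^ 2 / 2) := by
      intro Z
      simp [fval, frob, Matrix.mul_apply, Matrix.transpose_apply, Matrix.map_apply]
    rw [hfv, hfv]
    have hb : ∀ p q : Fin n, ((∑ i, Y i p * Y i q) ^ 2 / 2) ≤ ((∑ i, X i p * X i q) ^ 2 / 2) := by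
      intro p q
      rw [hsign p q]
      have hc := Finset.sum_mul_sq_le_sq_mul_sq Finset.univ (fun i => Y i p) (fun i => Y i q)
      rw [hY p, hY q] at hc
      simp only [mul_one] at hc
      linarith
    have hsum : (∑ p, ∑ q, ((∑ i, Y i p * Y i q) ^ 2 / 2))
        ≤ ∑ p, ∑ q, ((∑ i, X i p * X i q) ^ 2 / 2) :=
      Finset.sum_le_sum fun p _ => Finset.sum_le_sum fun q _ => hb p q
    linarith
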